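/- Let Φ be an irreducible root system and β ∈ Φ. Then the following are equivalent: (i) for every α ∈ Φ, the set (α + ℤβ) ∩ Φ contains no string of three consecutive elements, i.e., there is no α ∈ Φ with α + β ∈ Φ and α + 2β ∈ Φ; (ii) β is a long root. -/

import Mathlib

/-!  Common setup: a finite reduced crystallographic root system `Φ` in a Euclidean
space `E`, positive systems, reflections, the Weyl group, inversion sets and length. -/

noncomputable section

namespace CoisoRS

open RealInnerProductSpace

variable {E : Type*} [NormedAddCommGroup E] [InnerProductSpace ℝ E]

/-- `Φ` is a finite reduced crystallographic root system in the Euclidean space `E`. -/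
structure IsRootSystem (Φ : Set E) : Prop where
  finite : Φ.Finite
  nonempty : Φ.Nonempty
  ne_zero : ∀ α ∈ Φ, α ≠ 0
  reduced : ∀ α ∈ Φ, ∀ c : ℝ, c • α ∈ Φ → c = 1 ∨ c = -1
  crystallographic : ∀ α ∈ Φ, ∀ β ∈ Φ, ∃ n : ℤ, 2 * ⟪α, β⟫ / ⟪β, β⟫ = (n : ℝ)
  reflection_mem : ∀ α ∈ Φ, ∀ β ∈ Φ, β - (2 * ⟪β, α⟫ / ⟪α, α⟫) • α ∈ Φ

/-- The root system `Φ` is irreducible: it does not split as a union of two nonempty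
mutually orthogonal subsets. -/
def IsIrreducibleRS (Φ : Set E) : Prop :=
  ¬ ∃ Φ₁ Φ₂ : Set E, Φ₁.Nonempty ∧ Φ₂.Nonempty ∧ Φ = Φ₁ ∪ Φ₂ ∧
      ∀ α ∈ Φ₁, ∀ β ∈ Φ₂, ⟪α, β⟫ = 0

/-- `β` is a long root of `Φ`: `(γ,γ) ≤ (β,β)` for all `γ ∈ Φ`. -/
def IsLongRoot (Φ : Set E) (β : E) : Prop :=
  β ∈ Φ ∧ ∀ γ ∈ Φ, ⟪γ, γ⟫ ≤ ⟪β, β⟫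

/-- `P` is a system of positive roots of `Φ`. -/
structure IsPositiveSystem (Φ P : Set E) : Prop where
  subset : P ⊆ Φ
  mem_or_neg_mem : ∀ α ∈ Φ, α ∈ P ∨ -α ∈ P
  not_neg_mem : ∀ α ∈ P, -α ∉ P
  add_mem : ∀ α ∈ P, ∀ β ∈ P, α + β ∈ Φ → α + β ∈ P

/-- The reflection `s_β(x) = x − (2(x,β)/(β,β)) β` through (the hyperplane orthogonal
to) `β`. -/
def sRefl (β : E) (x : E) : E := x - (2 * ⟪x, β⟫ / ⟪β, β⟫) • β

/-- The set of reflections through the roots of `Φ`, as linear automorphisms of `E`. -/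
def reflections (Φ : Set E) : Set (E ≃ₗ[ℝ] E) :=
  {w | ∃ β ∈ Φ, ∀ x, w x = sRefl β x}

/-- The Weyl group `W` of `Φ`: the subgroup of `GL(E)` generated by the reflections
through the roots. -/
def weylGroup (Φ : Set E) : Subgroup (E ≃ₗ[ℝ] E) := Subgroup.closure (reflections Φ)

/-- The inversion set `Φ_u = {α ∈ Φ⁺ : u⁻¹(α) ∈ −Φ⁺}` of positive roots made negative
by `u⁻¹`. -/
def invSet (P : Set E) (u : E ≃ₗ[ℝ] E) : Set E := {α | α ∈ P ∧ -(u.symm α) ∈ P}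

/-- The length `ℓ(u) = |Φ_u|`. -/
def len (P : Set E) (u : E ≃ₗ[ℝ] E) : ℕ := (invSet P u).ncard

/-- `Φ_{s_β} = {α ∈ Φ⁺ : s_β(α) ∈ −Φ⁺}`. -/
def invSetRefl (P : Set E) (β : E) : Set E := {α | α ∈ P ∧ -(sRefl β α) ∈ P}

end CoisoRS

section Aux

open CoisoRS RealInnerProductSpace

variable {E : Type*} [NormedAddCommGroup E] [InnerProductSpace ℝ E]

lemma CoisoRS.inner_self_pos_of_ne {x : E} (hx : x ≠ 0) : (0:ℝ) < ⟪x, x⟫ :=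
  not_le.mp (fun h => hx (real_inner_self_nonpos.mp h))

lemma CoisoRS.inner_self_pos_of_mem {Φ : Set E} (hΦ : IsRootSystem Φ) {α : E} (hα : α ∈ Φ) :
    (0:ℝ) < ⟪α, α⟫ :=
  CoisoRS.inner_self_pos_of_ne (hΦ.ne_zero α hα)

lemma CoisoRS.refl_inner_self {α : E} (hα0 : ⟪α, α⟫ ≠ (0:ℝ)) (x : E) :
    ⟪x - (2 * ⟪x, α⟫ / ⟪α, α⟫) • α, x - (2 * ⟪x, α⟫ / ⟪α, α⟫) • α⟫ = ⟪x, x⟫ := by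
  set c : ℝ := 2 * ⟪x, α⟫ / ⟪α, α⟫ with hc
  have hcc : c * ⟪α, α⟫ = 2 * ⟪x, α⟫ := by
    rw [hc]; field_simp
  have hexp : ⟪x - c • α, x - c • α⟫ = ⟪x, x⟫ - 2 * (c * ⟪x, α⟫) + c * (c * ⟪α, α⟫) := by
    rw [inner_sub_sub_self]
    simp [inner_sub_sub_self, real_inner_smul_left, real_inner_smul_right, real_inner_comm x α, norm_smul, mul_pow, Real.norm_eq_abs, sq_abs]
    ring
  rw [hexp, hcc]; ring

lemma CoisoRS.neg_mem_rs {Φ : Set E} (hΦ : IsRootSystem Φ) {α : E} (hα : α ∈ Φ) : -α ∈ Φ := by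
  have h := hΦ.reflection_mem α hα α hα
  have h0 : ⟪α, α⟫ ≠ (0:ℝ) := ne_of_gt (CoisoRS.inner_self_pos_of_mem hΦ hα)
  have : (2 * ⟪α, α⟫ / ⟪α, α⟫ : ℝ) = 2 := by field_simp
  rw [this] at h
  have h2 : α - (2:ℝ) • α = -α := by module
  rwa [h2] at h

/-- If two roots have negative inner product and don't sum to zero, their sum is a root. -/
lemma CoisoRS.add_mem_of_inner_neg {Φ : Set E} (hΦ : IsRootSystem Φ) {α β : E}
    (hα : α ∈ Φ) (hβ : β ∈ Φ) (hneg : ⟪α, β⟫ < 0) (hne : α + β ≠ 0) : α + β ∈ Φ := by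
  obtain ⟨n, hn⟩ := hΦ.crystallographic α hα β hβ
  obtain ⟨m, hm⟩ := hΦ.crystallographic β hβ α hα
  have hαα : (0:ℝ) < ⟪α, α⟫ := CoisoRS.inner_self_pos_of_mem hΦ hα
  have hββ : (0:ℝ) < ⟪β, β⟫ := CoisoRS.inner_self_pos_of_mem hΦ hβ
  have hsym : ⟪β, α⟫ = ⟪α, β⟫ := real_inner_comm α β
  have hn' : 2 * ⟪α, β⟫ = (n:ℝ) * ⟪β, β⟫ := by
    field_simp at hn; linarith [hn]
  have hm' : 2 * ⟪α, β⟫ = (m:ℝ) * ⟪α, α⟫ := by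
    rw [hsym] at hm; field_simp at hm; linarith [hm]
  have hnneg : (n:ℝ) < 0 := by
    by_contra h
    push_neg at h
    nlinarith
  have hmneg : (m:ℝ) < 0 := by
    by_contra h
    push_neg at h
    nlinarith
  have hpos : (0:ℝ) < ⟪α + β, α + β⟫ := CoisoRS.inner_self_pos_of_ne hne
  have hexp : ⟪α + β, α + β⟫ = ⟪α, α⟫ + 2 * ⟪α, β⟫ + ⟪β, β⟫ := real_inner_add_add_self α β
  -- not both n ≤ -2 and m ≤ -2
  have hkey : n = -1 ∨ m = -1 := by
    by_contra hcon
    push_neg at hcon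
    have hn1 : n < 0 := by exact_mod_cast hnneg
    have hm1 : m < 0 := by exact_mod_cast hmneg
    have hn2 : (n:ℝ) ≤ -2 := by exact_mod_cast (by omega : n ≤ -2)
    have hm2 : (m:ℝ) ≤ -2 := by exact_mod_cast (by omega : m ≤ -2)
    nlinarith
  rcases hkey with h | h
  · have hmem := hΦ.reflection_mem β hβ α hα
    rw [hn, h] at hmem
    have : α - (((-1:ℤ)):ℝ) • β = α + β := by push_cast; module
    rwa [this] at hmem
  · have hmem := hΦ.reflection_mem α hα β hβ
    rw [hm, h] at hmem
    have : β - (((-1:ℤ)):ℝ) • α = α + β := by push_cast; module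
    rwa [this] at hmem

/-- In an irreducible root system, if some root is strictly longer than `β`, there is a
root strictly longer than `β` that is not orthogonal to `β`. -/
lemma CoisoRS.exists_long_not_orth {Φ : Set E} (hΦ : IsRootSystem Φ)
    (hirr : IsIrreducibleRS Φ) {β γ : E} (hβ : β ∈ Φ) (hγ : γ ∈ Φ)
    (hlen : ⟪β, β⟫ < ⟪γ, γ⟫) :
    ∃ δ ∈ Φ, ⟪β, β⟫ < ⟪δ, δ⟫ ∧ ⟪δ, β⟫ ≠ 0 := by
  classical
  set r : E → E → Prop := fun x y => x ∈ Φ ∧ y ∈ Φ ∧ ⟪x, y⟫ ≠ 0 with hr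
  -- connectivity
  have hconn : Relation.ReflTransGen r γ β := by
    by_contra hcon
    apply hirr
    refine ⟨{x | x ∈ Φ ∧ Relation.ReflTransGen r γ x},
      {x | x ∈ Φ ∧ ¬ Relation.ReflTransGen r γ x}, ⟨γ, hγ, Relation.ReflTransGen.refl⟩,
      ⟨β, hβ, hcon⟩, ?_, ?_⟩
    · ext x
      constructor
      · intro hx
        by_cases h : Relation.ReflTransGen r γ x
        · exact Or.inl ⟨hx, h⟩
        · exact Or.inr ⟨hx, h⟩
      · rintro (⟨h, -⟩ | ⟨h, -⟩) <;> exact h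
    · rintro a ⟨haΦ, ha⟩ b ⟨hbΦ, hb⟩
      by_contra h
      exact hb (ha.tail ⟨haΦ, hbΦ, h⟩)
  -- key induction along the chain
  have key : ∀ x, Relation.ReflTransGen r x β →
      ∀ δ ∈ Φ, ⟪β, β⟫ < ⟪δ, δ⟫ → ⟪δ, x⟫ ≠ 0 →
      ∃ δ' ∈ Φ, ⟪β, β⟫ < ⟪δ', δ'⟫ ∧ ⟪δ', β⟫ ≠ 0 := by
    intro x hx
    induction hx using Relation.ReflTransGen.head_induction_on with
    | refl =>
      intro δ hδ h1 h2
      exact ⟨δ, hδ, h1, h2⟩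
    | head hab hbc ih =>
      rename_i a b
      obtain ⟨haΦ, hbΦ, hab0⟩ := hab
      intro δ hδ hlong hδa
      by_cases hδb : ⟪δ, b⟫ ≠ 0
      · exact ih δ hδ hlong hδb
      · push_neg at hδb
        have haa : (0:ℝ) < ⟪a, a⟫ := CoisoRS.inner_self_pos_of_mem hΦ haΦ
        set c : ℝ := 2 * ⟪δ, a⟫ / ⟪a, a⟫ with hcdef
        have hc0 : c ≠ 0 := by
          rw [hcdef]
          exact div_ne_zero (by simpa using hδa) (ne_of_gt haa)
        have hmem : δ - c • a ∈ Φ := hΦ.reflection_mem a haΦ δ hδ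
        have hnorm : ⟪δ - c • a, δ - c • a⟫ = ⟪δ, δ⟫ :=
          CoisoRS.refl_inner_self (ne_of_gt haa) δ
        have hinner : ⟪δ - c • a, b⟫ = - (c * ⟪a, b⟫) := by
          rw [inner_sub_left, real_inner_smul_left, hδb]
          ring
        refine ih (δ - c • a) hmem (by rwa [hnorm]) ?_
        rw [hinner]
        simpa using mul_ne_zero hc0 hab0
  exact key γ hconn γ hγ hlen (ne_of_gt (CoisoRS.inner_self_pos_of_mem hΦ hγ))

end Aux
open CoisoRS RealInnerProductSpace in
/-- For `β` in an irreducible root system `Φ`, the following are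
equivalent: (i) there is no `α ∈ Φ` with `α + β ∈ Φ` and `α + 2β ∈ Φ` (no root string
of three consecutive elements in any `(α + ℤβ) ∩ Φ`); (ii) `β` is a long root. -/
theorem statement11 {E : Type*} [NormedAddCommGroup E] [InnerProductSpace ℝ E]
    (Φ : Set E) (hΦ : IsRootSystem Φ) (hirr : IsIrreducibleRS Φ)
    (β : E) (hβ : β ∈ Φ) :
    (¬ ∃ α ∈ Φ, α + β ∈ Φ ∧ α + (2 : ℝ) • β ∈ Φ) ↔ IsLongRoot Φ β := by
  have hββ : (0:ℝ) < ⟪β, β⟫ := CoisoRS.inner_self_pos_of_mem hΦ hβ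
  constructor
  · -- no string → long
    intro hno
    refine ⟨hβ, ?_⟩
    by_contra hcon
    push_neg at hcon
    obtain ⟨γ, hγ, hlt⟩ := hcon
    obtain ⟨δ0, hδ0, hδ0len, hδ0β⟩ := CoisoRS.exists_long_not_orth hΦ hirr hβ hγ hlt
    obtain ⟨δ, hδ, hδlen, hδβ⟩ : ∃ δ ∈ Φ, ⟪β, β⟫ < ⟪δ, δ⟫ ∧ ⟪δ, β⟫ < 0 := by
      rcases lt_or_gt_of_ne hδ0β with h | h
      · exact ⟨δ0, hδ0, hδ0len, h⟩
      · refine ⟨-δ0, CoisoRS.neg_mem_rs hΦ hδ0, by simpa using hδ0len, ?_⟩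
        rw [inner_neg_left]
        linarith
    have hδδ : (0:ℝ) < ⟪δ, δ⟫ := CoisoRS.inner_self_pos_of_mem hΦ hδ
    obtain ⟨n, hn⟩ := hΦ.crystallographic δ hδ β hβ
    obtain ⟨m, hm⟩ := hΦ.crystallographic β hβ δ hδ
    have hsym : ⟪β, δ⟫ = ⟪δ, β⟫ := real_inner_comm δ β
    have hn' : 2 * ⟪δ, β⟫ = (n:ℝ) * ⟪β, β⟫ := by
      field_simp at hn; linarith [hn]
    have hm' : 2 * ⟪δ, β⟫ = (m:ℝ) * ⟪δ, δ⟫ := by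
      rw [hsym] at hm; field_simp at hm; linarith [hm]
    have hmneg : (m:ℝ) < 0 := by nlinarith
    have hm1 : m ≤ -1 := by
      have : m < 0 := by exact_mod_cast hmneg
      omega
    have hm1' : (m:ℝ) ≤ -1 := by exact_mod_cast hm1
    have hnm : (n:ℝ) < (m:ℝ) := by nlinarith
    have hn2 : n ≤ -2 := by
      have : n < m := by exact_mod_cast hnm
      omega
    have hn2' : (n:ℝ) ≤ -2 := by exact_mod_cast hn2
    -- δ + β ∈ Φ
    have hne1 : δ + β ≠ 0 := by
      intro h
      have : δ = -β := by
        have := congrArg (fun z => z - β) h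
        simpa [add_sub_cancel_right] using this
      rw [this, inner_neg_neg] at hδlen
      exact lt_irrefl _ hδlen
    have hsum1 : δ + β ∈ Φ := CoisoRS.add_mem_of_inner_neg hΦ hδ hβ hδβ hne1
    -- δ + 2β ∈ Φ
    have hsum2 : δ + (2:ℝ) • β ∈ Φ := by
      rcases eq_or_lt_of_le hn2 with h | h
      · -- n = -2 : use reflection
        have hmem := hΦ.reflection_mem β hβ δ hδ
        rw [hn, h] at hmem
        have he : δ - (((-2:ℤ)):ℝ) • β = δ + (2:ℝ) • β := by push_cast; module
        rwa [he] at hmem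
      · -- n ≤ -3
        have hn3 : (n:ℝ) ≤ -3 := by exact_mod_cast (by omega : n ≤ -3)
        have hip : ⟪δ + β, β⟫ < 0 := by
          rw [inner_add_left]
          nlinarith
        have hne2 : δ + β + β ≠ 0 := by
          intro h
          have hδe : δ = (-2:ℝ) • β := by
            have : δ = -β - β := by
              have := congrArg (fun z => z - β - β) h
              simpa [add_sub_cancel_right] using this
            rw [this]; module
          rw [hδe] at hδ
          rcases hΦ.reduced β hβ (-2) hδ with h' | h' <;> norm_num at h'
        have := CoisoRS.add_mem_of_inner_neg hΦ hsum1 hβ hip hne2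
        have he : δ + β + β = δ + (2:ℝ) • β := by module
        rwa [he] at this
    exact hno ⟨δ, hδ, hsum1, hsum2⟩
  · -- long → no string
    rintro ⟨-, hlong⟩ ⟨α, hα, hαβ, hα2β⟩
    have he : α + (2:ℝ) • β = α + β + β := by module
    rw [he] at hα2β
    have e1 : ⟪α + β + β, α + β + β⟫ ≤ ⟪β, β⟫ := hlong _ hα2β
    have e2 : ⟪α, α⟫ ≤ ⟪β, β⟫ := hlong α hα
    have e3 : (0:ℝ) < ⟪α + β, α + β⟫ :=
      CoisoRS.inner_self_pos_of_ne (hΦ.ne_zero _ hαβ)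
    have x1 : ⟪α + β, α + β⟫ = ⟪α, α⟫ + 2 * ⟪α, β⟫ + ⟪β, β⟫ := real_inner_add_add_self α β
    have x2 : ⟪α + β + β, α + β + β⟫ = ⟪α + β, α + β⟫ + 2 * ⟪α + β, β⟫ + ⟪β, β⟫ :=
      real_inner_add_add_self (α + β) β
    have x3 : ⟪α + β, β⟫ = ⟪α, β⟫ + ⟪β, β⟫ := inner_add_left α β β
    linarith
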